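/- Let H be a Hermitian operator with 0 ≤ H ≤ I on a Hilbert space, and define the channel Φ_H(ρ) = ½tr(Hρ)|w⟩⟨w| + tr((I − ½H)ρ)|w'⟩⟨w'|, where |w⟩, |w'⟩ are orthogonal unit vectors. Then for a density operator ρ, Φ_H(ρ) is a pure state if and only if tr(Hρ) = 0; consequently the minimum output entropy of Φ_H is 0 if and only if H has a zero eigenvalue. -/

import Mathlib

open Matrix ComplexOrder

/-- A density operator: positive semidefinite with trace 1. -/
def IsDensity {d : Type*} [Fintype d] (ρ : Matrix d d ℂ) : Prop :=
  ρ.PosSemidef ∧ ρ.trace = 1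

/-- The outer product `|ψ⟩⟨ψ|`. -/
def outer {d : Type*} (ψ : d → ℂ) : Matrix d d ℂ :=
  vecMulVec ψ (star ψ)

/-- A matrix is a pure state if it is the outer product of a unit vector. -/
def IsPure {d : Type*} [Fintype d] (M : Matrix d d ℂ) : Prop :=
  ∃ v : d → ℂ, star v ⬝ᵥ v = 1 ∧ M = outer v

/-- Von Neumann entropy via eigenvalues (junk value `0` for non-Hermitian input). -/
noncomputable def vnEntropy {d : Type*} [Fintype d] [DecidableEq d]
    (ρ : Matrix d d ℂ) : ℝ :=
  if h : ρ.IsHermitian then -∑ i, h.eigenvalues i * Real.log (h.eigenvalues i) else 0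

/-- The channel `Φ_H(ρ) = ½tr(Hρ)|w⟩⟨w| + tr((I − ½H)ρ)|w'⟩⟨w'|`. -/
noncomputable def hamChannel {n m : ℕ} (H : Matrix (Fin n) (Fin n) ℂ)
    (w w' : Fin m → ℂ) (ρ : Matrix (Fin n) (Fin n) ℂ) : Matrix (Fin m) (Fin m) ℂ :=
  (((1 : ℂ) / 2) * (H * ρ).trace) • outer w +
    (((1 - ((1 : ℂ) / 2) • H) * ρ).trace) • outer w'


section Aux

lemma star_dot {d : Type*} [Fintype d] (v x : d → ℂ) :
    star x ⬝ᵥ v = star (star v ⬝ᵥ x) := by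
  rw [← star_dotProduct_star, star_star]

lemma outer_mulVec {d : Type*} [Fintype d] (v x : d → ℂ) :
    (outer v) *ᵥ x = (star v ⬝ᵥ x) • v := by
  funext i
  simp [outer, mulVec, dotProduct, vecMulVec_apply, Finset.mul_sum, mul_comm, mul_left_comm]

lemma outer_isHermitian {d : Type*} (v : d → ℂ) : (outer v).IsHermitian := by
  ext i j
  simp [outer, conjTranspose_apply, vecMulVec_apply, mul_comm]

lemma outer_posSemidef {d : Type*} [Fintype d] (v : d → ℂ) : (outer v).PosSemidef := by
  refine PosSemidef.of_dotProduct_mulVec_nonneg (outer_isHermitian v) fun x => ?_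
  rw [outer_mulVec, dotProduct_smul, smul_eq_mul, star_dot]
  exact star_mul_self_nonneg _

lemma outer_trace {d : Type*} [Fintype d] (v : d → ℂ) :
    (outer v).trace = star v ⬝ᵥ v := by
  simp [outer, trace, diag, vecMulVec_apply, dotProduct, mul_comm]

lemma mul_outer_eq {d : Type*} [Fintype d] (A : Matrix d d ℂ) (v : d → ℂ) :
    A * outer v = vecMulVec (A *ᵥ v) (star v) := by
  ext i j
  simp [outer, mul_apply, vecMulVec_apply, mulVec, dotProduct, Finset.sum_mul, mul_assoc]

lemma outer_mul_self {d : Type*} [Fintype d] {v : d → ℂ} (hv : star v ⬝ᵥ v = 1) :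
    outer v * outer v = outer v := by
  rw [mul_outer_eq, outer_mulVec, hv, one_smul, outer]

lemma psd_trace_nonneg {d : Type*} [Fintype d] [DecidableEq d] {M : Matrix d d ℂ}
    (h : M.PosSemidef) : 0 ≤ M.trace := by
  have hd : ∀ i, 0 ≤ M i i := by
    intro i
    have := h.dotProduct_mulVec_nonneg (Pi.single i 1)
    simpa [dotProduct, mulVec, Pi.single_apply] using this
  exact Finset.sum_nonneg fun i _ => hd i

lemma psd_smul {d : Type*} [Fintype d] {P : Matrix d d ℂ} (hP : P.PosSemidef) {r : ℝ}
    (hr : 0 ≤ r) : ((r : ℂ) • P).PosSemidef := by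
  refine PosSemidef.of_dotProduct_mulVec_nonneg ?_ fun x => ?_
  · have : ((r : ℂ) • P)ᴴ = (starRingEnd ℂ (r : ℂ)) • Pᴴ := conjTranspose_smul _ _
    rw [IsHermitian, this, hP.1.eq, Complex.conj_ofReal]
  · rw [smul_mulVec, dotProduct_smul, smul_eq_mul]
    exact mul_nonneg (Complex.zero_le_real.mpr hr) (hP.dotProduct_mulVec_nonneg x)

lemma herm_trace_eq {d : Type*} [Fintype d] [DecidableEq d] {M : Matrix d d ℂ}
    (hM : M.IsHermitian) : M.trace = ∑ i, (hM.eigenvalues i : ℂ) := by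
  conv_lhs => rw [hM.spectral_theorem, Unitary.conjStarAlgAut_apply]
  rw [Matrix.trace_mul_cycle,
    mem_unitaryGroup_iff'.mp (hM.eigenvectorUnitary).2, one_mul, trace_diagonal]
  simp

lemma eig_idem {d : Type*} [Fintype d] [DecidableEq d] {M : Matrix d d ℂ}
    (hM : M.IsHermitian) (h2 : M * M = M) (i : d) :
    hM.eigenvalues i = 0 ∨ hM.eigenvalues i = 1 := by
  have hb := hM.mulVec_eigenvectorBasis i
  have h1 : M *ᵥ (M *ᵥ ⇑(hM.eigenvectorBasis i)) =
      (hM.eigenvalues i * hM.eigenvalues i) • ⇑(hM.eigenvectorBasis i) := by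
    rw [hb, mulVec_smul, hb, smul_smul]
  rw [mulVec_mulVec, h2, hb] at h1
  have hbne : ⇑(hM.eigenvectorBasis i) ≠ 0 := by
    intro hc
    exact hM.eigenvectorBasis.orthonormal.ne_zero i (by ext j; exact congrFun hc j)
  have h3 : (hM.eigenvalues i - hM.eigenvalues i * hM.eigenvalues i) •
      ⇑(hM.eigenvectorBasis i) = 0 := by
    rw [sub_smul, h1, sub_self]
  rcases smul_eq_zero.mp h3 with h | h
  · have : hM.eigenvalues i * (1 - hM.eigenvalues i) = 0 := by ring_nf; linarith [h]
    rcases mul_eq_zero.mp this with h' | h'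
    · exact Or.inl h'
    · exact Or.inr (by linarith)
  · exact absurd h hbne

lemma vnEntropy_eq_zero_of_idem {d : Type*} [Fintype d] [DecidableEq d] {M : Matrix d d ℂ}
    (hM : M.IsHermitian) (h2 : M * M = M) : vnEntropy M = 0 := by
  rw [vnEntropy, dif_pos hM, neg_eq_zero]
  refine Finset.sum_eq_zero fun i _ => ?_
  rcases eig_idem hM h2 i with h | h <;> simp [h]

lemma idem_of_entropy {d : Type*} [Fintype d] [DecidableEq d] {M : Matrix d d ℂ}
    (hpsd : M.PosSemidef) (htr : M.trace = 1) (hent : vnEntropy M = 0) : M * M = M := by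
  have hM := hpsd.1
  have hnn : ∀ i, 0 ≤ hM.eigenvalues i := hpsd.eigenvalues_nonneg
  have hsum : ∑ i, hM.eigenvalues i = 1 := by
    have h1 := herm_trace_eq hM
    rw [htr] at h1
    have h2 : ((∑ i, hM.eigenvalues i : ℝ) : ℂ) = 1 := by push_cast; rw [← h1]
    exact_mod_cast h2
  have hle1 : ∀ i, hM.eigenvalues i ≤ 1 := fun i =>
    hsum ▸ Finset.single_le_sum (fun j _ => hnn j) (Finset.mem_univ i)
  have hterm : ∀ i ∈ Finset.univ, hM.eigenvalues i * Real.log (hM.eigenvalues i) ≤ 0 := by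
    intro i _
    have hl := Real.log_nonpos (hnn i) (hle1 i)
    nlinarith [hnn i]
  rw [vnEntropy, dif_pos hM, neg_eq_zero] at hent
  have hz := (Finset.sum_eq_zero_iff_of_nonpos hterm).mp hent
  have heig : ∀ i, hM.eigenvalues i = 0 ∨ hM.eigenvalues i = 1 := by
    intro i
    rcases mul_eq_zero.mp (hz i (Finset.mem_univ i)) with h | h
    · exact Or.inl h
    · rcases Real.log_eq_zero.mp h with h | h | h
      · exact Or.inl h
      · exact Or.inr h
      · exact absurd h (by linarith [hnn i])
  have hU : star (hM.eigenvectorUnitary : Matrix d d ℂ) * (hM.eigenvectorUnitary : Matrix d d ℂ) = 1 :=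
    mem_unitaryGroup_iff'.mp (hM.eigenvectorUnitary).2
  set U := (hM.eigenvectorUnitary : Matrix d d ℂ) with hUdef
  set D := diagonal ((RCLike.ofReal ∘ hM.eigenvalues : d → ℂ)) with hDdef
  have hDD : D * D = D := by
    rw [hDdef, diagonal_mul_diagonal]
    ext i j
    rcases heig i with h | h <;> simp [Matrix.diagonal_apply, Function.comp, h]
  have hkey : U * D * star U * (U * D * star U) = U * (D * D) * star U := by
    calc U * D * star U * (U * D * star U)
        = U * D * (star U * U) * D * star U := by simp only [mul_assoc]
      _ = U * (D * D) * star U := by rw [hU, mul_one, mul_assoc U D D]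
  conv_lhs => rw [hM.spectral_theorem, Unitary.conjStarAlgAut_apply]
  conv_rhs => rw [hM.spectral_theorem, Unitary.conjStarAlgAut_apply]
  rw [← hUdef, ← hDdef, hkey, hDD]

lemma posSemidef_iff_eq_transpose_mul_self {d : Type*} [Fintype d] [DecidableEq d]
    {A : Matrix d d ℂ} : A.PosSemidef ↔ ∃ B : Matrix d d ℂ, A = Bᴴ * B := by
  open scoped MatrixOrder in
  constructor
  · intro h
    obtain ⟨B, hB⟩ := CStarAlgebra.nonneg_iff_eq_star_mul_self.mp h.nonneg
    exact ⟨B, hB⟩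
  · rintro ⟨B, rfl⟩
    exact posSemidef_conjTranspose_mul_self B

end Aux

lemma density_trace_real {n : ℕ} (H : Matrix (Fin n) (Fin n) ℂ)
    (hH : H.PosSemidef) (hHle : ((1 : Matrix (Fin n) (Fin n) ℂ) - H).PosSemidef)
    (ρ : Matrix (Fin n) (Fin n) ℂ) (hρ : IsDensity ρ) :
    ∃ s : ℝ, (H * ρ).trace = (s : ℂ) ∧ 0 ≤ s ∧ s ≤ 1 := by
  obtain ⟨B, hB⟩ := posSemidef_iff_eq_transpose_mul_self.mp hρ.1
  have key : ∀ K : Matrix (Fin n) (Fin n) ℂ, K.PosSemidef → 0 ≤ (K * ρ).trace := by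
    intro K hK
    have h1 : (K * ρ).trace = (B * K * Bᴴ).trace := by
      rw [hB, trace_mul_comm, show Bᴴ * B * K = Bᴴ * (B * K) by simp only [mul_assoc],
        trace_mul_comm, mul_assoc]
    rw [h1]
    exact psd_trace_nonneg (hK.mul_mul_conjTranspose_same B)
  have h0 := key H hH
  have h1' := key _ hHle
  have hsub : (((1 : Matrix (Fin n) (Fin n) ℂ) - H) * ρ).trace = 1 - (H * ρ).trace := by
    rw [sub_mul, one_mul, trace_sub, hρ.2]
  rw [hsub] at h1'
  obtain ⟨hre, him⟩ := Complex.nonneg_iff.mp h0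
  obtain ⟨hre1, _⟩ := Complex.nonneg_iff.mp h1'
  refine ⟨(H * ρ).trace.re, ?_, hre, ?_⟩
  · apply Complex.ext <;> simp [← him]
  · simp [Complex.sub_re] at hre1
    linarith

lemma chan_eq {n m : ℕ} (H : Matrix (Fin n) (Fin n) ℂ) (w w' : Fin m → ℂ)
    (ρ : Matrix (Fin n) (Fin n) ℂ) (hρtr : ρ.trace = 1) :
    hamChannel H w w' ρ = (((1 : ℂ) / 2) * (H * ρ).trace) • outer w +
      (1 - ((1 : ℂ) / 2) * (H * ρ).trace) • outer w' := by
  unfold hamChannel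
  congr 2
  rw [sub_mul, one_mul, trace_sub, hρtr, smul_mul_assoc, trace_smul, smul_eq_mul]

lemma chan_mulVec {n m : ℕ} (H : Matrix (Fin n) (Fin n) ℂ) (w w' : Fin m → ℂ)
    (ρ : Matrix (Fin n) (Fin n) ℂ) (hρtr : ρ.trace = 1)
    (hw : star w ⬝ᵥ w = 1) (horth : star w ⬝ᵥ w' = 0) :
    (hamChannel H w w' ρ) *ᵥ w = (((1 : ℂ) / 2) * (H * ρ).trace) • w := by
  have horth' : star w' ⬝ᵥ w = 0 := by rw [star_dot w w', horth, star_zero]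
  rw [chan_eq H w w' ρ hρtr, add_mulVec, smul_mulVec, smul_mulVec,
    outer_mulVec, outer_mulVec, hw, horth', one_smul, zero_smul, smul_zero, add_zero]

lemma idem_imp_t_zero {n m : ℕ} (H : Matrix (Fin n) (Fin n) ℂ)
    (hH : H.PosSemidef) (hHle : ((1 : Matrix (Fin n) (Fin n) ℂ) - H).PosSemidef)
    (w w' : Fin m → ℂ) (hw : star w ⬝ᵥ w = 1) (horth : star w ⬝ᵥ w' = 0)
    (ρ : Matrix (Fin n) (Fin n) ℂ) (hρ : IsDensity ρ)
    (hMM : hamChannel H w w' ρ * hamChannel H w w' ρ = hamChannel H w w' ρ) :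
    (H * ρ).trace = 0 := by
  obtain ⟨s, hts, hs0, hs1⟩ := density_trace_real H hH hHle ρ hρ
  set a : ℂ := ((1 : ℂ) / 2) * (H * ρ).trace with ha
  have hv := chan_mulVec H w w' ρ hρ.2 hw horth
  have h2 : hamChannel H w w' ρ *ᵥ (hamChannel H w w' ρ *ᵥ w) = (a * a) • w := by
    rw [hv, mulVec_smul, hv, smul_smul]
  rw [mulVec_mulVec, hMM, hv] at h2
  have hwne : w ≠ 0 := by
    intro h
    rw [h] at hw
    simp at hw
  have h3 : (a * a - a) • w = 0 := by rw [sub_smul, h2, sub_self]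
  rcases smul_eq_zero.mp h3 with h | h
  · have : a = 0 ∨ a = 1 := by
      rcases mul_eq_zero.mp (show a * (a - 1) = 0 by linear_combination h) with h' | h'
      · exact Or.inl h'
      · exact Or.inr (by linear_combination h')
    rcases this with h' | h'
    · rw [ha] at h'
      rcases mul_eq_zero.mp h' with h'' | h''
      · norm_num at h''
      · exact h''
    · exfalso
      rw [ha, hts] at h'
      have : (s : ℂ) = 2 := by
        field_simp at h'
        exact_mod_cast h'
      have : s = 2 := by exact_mod_cast this
      linarith
  · exact absurd h hwne

theorem ham_channel_pure_iff_and_min_entropy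
    {n m : ℕ} (H : Matrix (Fin n) (Fin n) ℂ)
    (hH : H.PosSemidef) (hHle : ((1 : Matrix (Fin n) (Fin n) ℂ) - H).PosSemidef)
    (w w' : Fin m → ℂ)
    (hw : star w ⬝ᵥ w = 1) (hw' : star w' ⬝ᵥ w' = 1) (horth : star w ⬝ᵥ w' = 0) :
    (∀ ρ : Matrix (Fin n) (Fin n) ℂ, IsDensity ρ →
      (IsPure (hamChannel H w w' ρ) ↔ (H * ρ).trace = 0)) ∧
    ((∃ ρ : Matrix (Fin n) (Fin n) ℂ, IsDensity ρ ∧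
        vnEntropy (hamChannel H w w' ρ) = 0) ↔
      ∃ v : Fin n → ℂ, v ≠ 0 ∧ H.mulVec v = 0) := by
  constructor
  · intro ρ hρ
    constructor
    · rintro ⟨v, hv, hMv⟩
      exact idem_imp_t_zero H hH hHle w w' hw horth ρ hρ
        (by rw [hMv]; exact outer_mul_self hv)
    · intro ht
      refine ⟨w', hw', ?_⟩
      rw [chan_eq H w w' ρ hρ.2, ht]
      simp
  · constructor
    · rintro ⟨ρ, hρ, hent⟩
      obtain ⟨s, hts, hs0, hs1⟩ := density_trace_real H hH hHle ρ hρ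
      have hM : hamChannel H w w' ρ =
          ((s / 2 : ℝ) : ℂ) • outer w + (((1 - s / 2 : ℝ)) : ℂ) • outer w' := by
        rw [chan_eq H w w' ρ hρ.2, hts]
        congr 1 <;> [skip; skip] <;> congr 1 <;> push_cast <;> ring
      have hpsd : (hamChannel H w w' ρ).PosSemidef := by
        rw [hM]
        exact (psd_smul (outer_posSemidef w) (by linarith)).add
          (psd_smul (outer_posSemidef w') (by linarith))
      have htr : (hamChannel H w w' ρ).trace = 1 := by
        rw [hM, trace_add, trace_smul, trace_smul, outer_trace, outer_trace, hw, hw']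
        push_cast
        simp only [smul_eq_mul, mul_one]
        ring
      have hMM := idem_of_entropy hpsd htr hent
      have ht := idem_imp_t_zero H hH hHle w w' hw horth ρ hρ hMM
      obtain ⟨B, hB⟩ := posSemidef_iff_eq_transpose_mul_self.mp hρ.1
      obtain ⟨C, hC⟩ := posSemidef_iff_eq_transpose_mul_self.mp hH
      have htrA : ((C * Bᴴ) * (C * Bᴴ)ᴴ).trace = 0 := by
        rw [conjTranspose_mul, conjTranspose_conjTranspose]
        have he : (C * Bᴴ * (B * Cᴴ)).trace = (H * ρ).trace := by
          calc (C * Bᴴ * (B * Cᴴ)).trace = ((C * Bᴴ * B) * Cᴴ).trace := by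
                simp only [mul_assoc]
            _ = (Cᴴ * (C * Bᴴ * B)).trace := trace_mul_comm _ _
            _ = (H * ρ).trace := by rw [hB, hC]; simp only [mul_assoc]
        rw [he, ht]
      have hA0 : C * Bᴴ = 0 := by
        set A := C * Bᴴ with hA
        have he : (A * Aᴴ).trace = ((∑ i, ∑ j, Complex.normSq (A i j) : ℝ) : ℂ) := by
          rw [trace]
          push_cast
          refine Finset.sum_congr rfl fun i _ => ?_
          rw [diag, mul_apply]
          refine Finset.sum_congr rfl fun j _ => ?_
          rw [conjTranspose_apply, show star (A i j) = (starRingEnd ℂ) (A i j) from rfl,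
            Complex.mul_conj]
        rw [he] at htrA
        have hs : (∑ i, ∑ j, Complex.normSq (A i j) : ℝ) = 0 := by exact_mod_cast htrA
        ext i j
        have h1 : ∀ i ∈ Finset.univ, (0:ℝ) ≤ ∑ j, Complex.normSq (A i j) :=
          fun i _ => Finset.sum_nonneg fun j _ => Complex.normSq_nonneg _
        have h2 := (Finset.sum_eq_zero_iff_of_nonneg h1).mp hs i (Finset.mem_univ i)
        have h3 := (Finset.sum_eq_zero_iff_of_nonneg
          (fun j _ => Complex.normSq_nonneg (A i j))).mp h2 j (Finset.mem_univ j)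
        simpa using Complex.normSq_eq_zero.mp h3
      have hHρ : H * ρ = 0 := by
        rw [hB, hC, show Cᴴ * C * (Bᴴ * B) = Cᴴ * (C * Bᴴ * B) by simp only [mul_assoc], hA0]
        simp
      have hρne : ∃ i j, ρ i j ≠ 0 := by
        by_contra h
        push_neg at h
        have hz : ρ = 0 := by ext i j; exact h i j
        have h1 := hρ.2
        rw [hz, trace_zero] at h1
        exact one_ne_zero h1.symm
      obtain ⟨i, j, hij⟩ := hρne
      refine ⟨fun k => ρ k j, fun h => hij (congrFun h i), ?_⟩
      funext i'
      have := congrFun (congrFun hHρ i') j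
      simpa [mul_apply, mulVec, dotProduct] using this
    · rintro ⟨v, hvne, hvker⟩
      set s := ∑ i, Complex.normSq (v i) with hsdef
      have hsc : star v ⬝ᵥ v = (s : ℂ) := by
        rw [hsdef, dotProduct]
        push_cast
        refine Finset.sum_congr rfl fun i _ => ?_
        rw [Pi.star_apply, mul_comm, show star (v i) = (starRingEnd ℂ) (v i) from rfl,
          Complex.mul_conj]
      obtain ⟨i0, hi0⟩ := Function.ne_iff.mp hvne
      have hs0 : 0 < s :=
        Finset.sum_pos' (fun i _ => Complex.normSq_nonneg _)
          ⟨i0, Finset.mem_univ i0, Complex.normSq_pos.mpr hi0⟩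
      set ρ : Matrix (Fin n) (Fin n) ℂ := ((s⁻¹ : ℝ) : ℂ) • outer v with hρdef
      have hρtr : ρ.trace = 1 := by
        rw [hρdef, trace_smul, outer_trace, hsc, smul_eq_mul]
        push_cast
        field_simp
      have hρd : IsDensity ρ := ⟨psd_smul (outer_posSemidef v) (by positivity), hρtr⟩
      have ht : (H * ρ).trace = 0 := by
        rw [hρdef, mul_smul_comm, mul_outer_eq, hvker]
        have : vecMulVec (0 : Fin n → ℂ) (star v) = 0 := by
          ext i j; simp [vecMulVec_apply]
        rw [this]
        simp
      refine ⟨ρ, hρd, ?_⟩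
      have hM : hamChannel H w w' ρ = outer w' := by
        rw [chan_eq H w w' ρ hρtr, ht]
        simp
      rw [hM]
      exact vnEntropy_eq_zero_of_idem (outer_isHermitian w') (outer_mul_self hw')
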